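/- Let Ω be a finite set with |Ω| = d ≥ 1, let p be a prime, and let P be a p-Sylow subgroup of Sym(Ω). Then the maximal cardinality of an orbit of P on Ω equals the largest power of p that is at most d, i.e., max over ω ∈ Ω of |P·ω| equals p^{⌊log_p d⌋}. -/

import Mathlib

/-- `H` is a `p`-Sylow subgroup of `K` (both subgroups of an ambient group `G`):
`H` is a `p`-subgroup of `K` that is maximal among `p`-subgroups of `K`. -/
def IsSylowIn {G : Type*} [Group G] (p : ℕ) (H K : Subgroup G) : Prop :=
  H ≤ K ∧ IsPGroup p H ∧
    ∀ Q : Subgroup G, Q ≤ K → IsPGroup p Q → H ≤ Q → Q = H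

/-- Upper bound: any orbit of a `p`-subgroup of `Sym(Ω)` has size at most
`p ^ ⌊log_p |Ω|⌋`. -/
lemma orbit_le_of_isPGroup {Ω : Type*} [Fintype Ω] (p : ℕ) (hp : p.Prime)
    (hd : 1 ≤ Fintype.card Ω) (H : Subgroup (Equiv.Perm Ω)) (hH : IsPGroup p H)
    (ω : Ω) :
    Nat.card (MulAction.orbit H ω) ≤ p ^ Nat.log p (Fintype.card Ω) := by
  classical
  have hfin : Finite Ω := Finite.of_fintype Ω
  haveI : Fact p.Prime := ⟨hp⟩
  -- the orbit's cardinality divides the cardinality of `H`, which is a `p`-power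
  obtain ⟨k, hk⟩ := IsPGroup.iff_card.mp hH
  have hdvd : Nat.card (MulAction.orbit H ω) ∣ Nat.card H := by
    have := MulAction.card_orbit_mul_card_stabilizer_eq_card_group H ω
    refine ⟨Nat.card (MulAction.stabilizer H ω), ?_⟩
    simpa [Nat.card_eq_fintype_card] using this.symm
  rw [hk] at hdvd
  obtain ⟨j, hj, hcard⟩ := (Nat.dvd_prime_pow hp).mp hdvd
  -- the orbit is a subset of `Ω`
  have hle : Nat.card (MulAction.orbit H ω) ≤ Fintype.card Ω := by
    rw [← Nat.card_eq_fintype_card]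
    exact Nat.card_le_card_of_injective _ Subtype.val_injective
  rw [hcard] at hle ⊢
  exact Nat.pow_le_pow_right hp.one_lt.le
    ((Nat.le_log_iff_pow_le hp.one_lt (by omega)).mpr hle)

open Pointwise

/-- Transporting an orbit along a conjugation. -/
lemma orbit_conj {Ω : Type*} (g : Equiv.Perm Ω) (H : Subgroup (Equiv.Perm Ω))
    (ω : Ω) :
    Nat.card (MulAction.orbit ((MulAut.conj g • H : Subgroup (Equiv.Perm Ω))) (g ω)) =
      Nat.card (MulAction.orbit H ω) := by
  have hset : MulAction.orbit ((MulAut.conj g • H : Subgroup (Equiv.Perm Ω))) (g ω) =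
      g '' (MulAction.orbit H ω) := by
    ext y
    constructor
    · rintro ⟨⟨h, hh⟩, rfl⟩
      obtain ⟨s, hs, rfl⟩ := (Subgroup.mem_smul_pointwise_iff_exists _ _ _).mp hh
      refine ⟨s ω, ⟨⟨s, hs⟩, rfl⟩, ?_⟩
      simp [MulAut.conj_apply, Equiv.Perm.smul_def, Equiv.Perm.mul_apply]
    · rintro ⟨x, ⟨⟨s, hs⟩, rfl⟩, rfl⟩
      refine ⟨⟨MulAut.conj g s, (Subgroup.mem_smul_pointwise_iff_exists _ _ _).mpr
        ⟨s, hs, rfl⟩⟩, ?_⟩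
      simp [MulAut.conj_apply, Equiv.Perm.smul_def, Equiv.Perm.mul_apply]
  rw [hset, Nat.card_image_of_injective g.injective]

/-- For a `p`-Sylow subgroup `P` of `Sym(Ω)` with `|Ω| = d ≥ 1`, the maximal size of an
orbit of `P` on `Ω` equals `p ^ ⌊log_p d⌋`, the largest power of `p` at most `d`. -/
theorem stmt6 {Ω : Type*} [Fintype Ω] (p : ℕ) (hp : p.Prime)
    (hd : 1 ≤ Fintype.card Ω)
    (P : Subgroup (Equiv.Perm Ω)) (hSylow : IsSylowIn p P ⊤) :
    (∀ ω : Ω,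
        Nat.card (MulAction.orbit P ω) ≤ p ^ Nat.log p (Fintype.card Ω)) ∧
      ∃ ω : Ω, Nat.card (MulAction.orbit P ω) = p ^ Nat.log p (Fintype.card Ω) := by
  classical
  have hfin : Finite Ω := Finite.of_fintype Ω
  haveI : Fact p.Prime := ⟨hp⟩
  obtain ⟨-, hPp, hPmax⟩ := hSylow
  set d := Fintype.card Ω with hdd
  set m := Nat.log p d with hm
  refine ⟨fun ω => orbit_le_of_isPGroup p hp hd P hPp ω, ?_⟩
  -- `P` is a Sylow subgroup in the sense of Mathlib
  let S : Sylow p (Equiv.Perm Ω) := ⟨P, hPp, fun hQ hle => hPmax _ le_top hQ hle⟩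
  have hpm_le : p ^ m ≤ d := Nat.pow_log_le_self p (by omega)
  by_cases hm0 : m = 0
  · -- trivial case: the largest power is `1`; any orbit works
    obtain ⟨ω⟩ : Nonempty Ω := Fintype.card_pos_iff.mp hd
    refine ⟨ω, le_antisymm (orbit_le_of_isPGroup p hp hd P hPp ω) ?_⟩
    rw [hm0, pow_zero]
    have : (MulAction.orbit P ω).Nonempty := MulAction.nonempty_orbit ω
    have hfo : (MulAction.orbit P ω).Finite := Set.toFinite _
    rw [Nat.one_le_iff_ne_zero, Nat.card_ne_zero]
    exact ⟨this.to_subtype, hfo⟩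
  · -- main case: build a cycle of length `p ^ m`
    have h2 : 2 ≤ p ^ m := by
      calc 2 ≤ p := hp.two_le
      _ = p ^ 1 := (pow_one p).symm
      _ ≤ p ^ m := Nat.pow_le_pow_right hp.pos (by omega)
    obtain ⟨t, -, ht⟩ := Finset.exists_subset_card_eq
      (show p ^ m ≤ (Finset.univ : Finset Ω).card by simpa using hpm_le)
    set l : List Ω := t.toList with hl
    have hnodup : l.Nodup := Finset.nodup_toList t
    have hlen : l.length = p ^ m := by simp [hl, ht]
    have hlen2 : 2 ≤ l.length := by omega
    set σ : Equiv.Perm Ω := l.formPerm with hσ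
    have hcyc : σ.IsCycle := List.isCycle_formPerm hnodup hlen2
    have hsupp : σ.support = l.toFinset :=
      List.support_formPerm_of_nodup l hnodup (by
        intro x hx
        rw [hx] at hlen2
        simp at hlen2)
    have hsuppcard : σ.support.card = p ^ m := by
      rw [hsupp, List.card_toFinset, List.dedup_eq_self.mpr hnodup, hlen]
    have horder : orderOf σ = p ^ m := by rw [hcyc.orderOf, hsuppcard]
    -- `Q = ⟨σ⟩` is a `p`-group
    set Q : Subgroup (Equiv.Perm Ω) := Subgroup.zpowers σ with hQdef
    have hQcard : Nat.card Q = p ^ m := by rw [hQdef, Nat.card_zpowers, horder]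
    have hQp : IsPGroup p Q := IsPGroup.of_card hQcard
    -- pick a point in the support of σ
    obtain ⟨ω, hω⟩ : ∃ ω, ω ∈ σ.support := by
      have : σ.support.Nonempty := Finset.card_pos.mp (by omega)
      exact this
    -- the orbit of `Q` at `ω` is the whole support of `σ`
    have horbQ : MulAction.orbit Q ω = (σ.support : Set Ω) := by
      ext y
      constructor
      · rintro ⟨⟨q, n, rfl⟩, rfl⟩
        show (σ ^ n) ω ∈ (σ.support : Set Ω)
        exact_mod_cast (Equiv.Perm.zpow_apply_mem_support (f := σ) (n := n)
          (x := ω)).mpr hω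
      · intro hy
        have hsc : σ.SameCycle ω y :=
          hcyc.sameCycle (Equiv.Perm.mem_support.mp hω) (Equiv.Perm.mem_support.mp hy)
        obtain ⟨n, hn⟩ := hsc
        exact ⟨⟨σ ^ n, n, rfl⟩, hn⟩
    have horbQcard : Nat.card (MulAction.orbit Q ω) = p ^ m := by
      rw [horbQ, Nat.card_coe_set_eq, Set.ncard_coe_finset, hsuppcard]
    -- extend `Q` to a Sylow subgroup `P'`
    obtain ⟨P', hQP'⟩ := hQp.exists_le_sylow
    have horbsub : MulAction.orbit Q ω ⊆ MulAction.orbit P'.toSubgroup ω := by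
      rintro y ⟨⟨q, hq⟩, rfl⟩
      exact ⟨⟨q, hQP' hq⟩, rfl⟩
    have horbP' : Nat.card (MulAction.orbit P'.toSubgroup ω) = p ^ m := by
      refine le_antisymm (orbit_le_of_isPGroup p hp hd _ P'.isPGroup' ω) ?_
      calc p ^ m = Nat.card (MulAction.orbit Q ω) := horbQcard.symm
        _ ≤ Nat.card (MulAction.orbit P'.toSubgroup ω) := by
            rw [Nat.card_coe_set_eq, Nat.card_coe_set_eq]
            exact Set.ncard_le_ncard horbsub (Set.toFinite _)
    -- conjugate `P'` to `P`
    obtain ⟨g, hg⟩ := MulAction.exists_smul_eq (Equiv.Perm Ω) P' S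
    have hgsub : (MulAut.conj g • (P' : Subgroup (Equiv.Perm Ω))) = P := by
      have := congrArg (Sylow.toSubgroup) hg
      rwa [Sylow.coe_subgroup_smul] at this
    refine ⟨g ω, ?_⟩
    rw [← hgsub, orbit_conj, horbP']
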